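/- Given two convex polygons A and B in ℝ² (considered as boundaries of convex hulls of finite point sets), if every vertex of A is within distance ε of (the boundary of) B and every vertex of B is within distance ε of A, then the Hausdorff distance between A and B is at most ε. -/

import Mathlib

open Metric Set
open scoped RealInnerProductSpace

local notation "E2" => EuclideanSpace ℝ (Fin 2)

lemma aux_mem_cthickening_iff {α : Type*} [PseudoMetricSpace α] {s : Set α}
    (hs : s.Nonempty) {δ : ℝ} (hδ : 0 ≤ δ) {x : α} :
    x ∈ cthickening δ s ↔ infDist x s ≤ δ := by
  rw [mem_cthickening_iff, infDist,
    ← ENNReal.le_ofReal_iff_toReal_le (infEdist_ne_top hs) hδ]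

lemma aux_nearest_frontier {F : Type*} [NormedAddCommGroup F] [NormedSpace ℝ F]
    {s : Set F} {x y : F} (hy : y ∈ s) (hx : x ∉ s)
    (hmin : dist x y = infDist x s) : y ∈ frontier s := by
  have hd : 0 < dist x y := dist_pos.2 (fun h => hx (h ▸ hy))
  rw [frontier_eq_closure_inter_closure]
  refine ⟨subset_closure hy, ?_⟩
  rw [Metric.mem_closure_iff]
  intro r hr
  set t : ℝ := min 1 (r / (2 * dist x y)) with ht
  have ht0 : 0 < t := lt_min one_pos (div_pos hr (by positivity))
  have ht1 : t ≤ 1 := min_le_left _ _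
  refine ⟨y + t • (x - y), ?_, ?_⟩
  · intro hmem
    have hdist : dist x (y + t • (x - y)) = (1 - t) * dist x y := by
      have : x - (y + t • (x - y)) = (1 - t) • (x - y) := by
        rw [sub_smul, one_smul]; abel
      rw [dist_eq_norm, this, norm_smul, Real.norm_eq_abs,
        abs_of_nonneg (by linarith), ← dist_eq_norm]
    have h1 : infDist x s ≤ (1 - t) * dist x y := hdist ▸ infDist_le_dist_of_mem hmem
    nlinarith [hmin]
  · have : dist y (y + t • (x - y)) = t * dist x y := by
      rw [dist_eq_norm, norm_sub_rev, show y + t • (x - y) - y = t • (x - y) by abel, norm_smul,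
        Real.norm_eq_abs, abs_of_pos ht0, norm_sub_rev, ← dist_eq_norm, dist_comm]
    rw [this]
    calc t * dist x y ≤ (r / (2 * dist x y)) * dist x y := by
          apply mul_le_mul_of_nonneg_right (min_le_right _ _) hd.le
      _ = r / 2 := by field_simp
      _ < r := by linarith

lemma aux_extreme (A : Finset E2) {e : E2}
    (he : e ∈ extremePoints ℝ (convexHull ℝ (A : Set E2))) :
    e ∈ A ∧ e ∉ convexHull ℝ ((A : Set E2) \ {e}) := by
  have heA : e ∈ A := extremePoints_convexHull_subset he
  refine ⟨heA, fun hmem => ?_⟩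
  have h2 := ((convex_convexHull ℝ (A : Set E2)).mem_extremePoints_iff_mem_diff_convexHull_diff).mp he
  refine h2.2 (convexHull_mono ?_ hmem)
  exact diff_subset_diff_left (subset_convexHull ℝ _)

lemma aux_hull_eq (A : Finset E2) :
    convexHull ℝ (extremePoints ℝ (convexHull ℝ (A : Set E2))) = convexHull ℝ (A : Set E2) := by
  have hcomp : IsCompact (convexHull ℝ (A : Set E2)) := A.finite_toSet.isCompact_convexHull (𝕜 := ℝ)
  have h := closure_convexHull_extremePoints hcomp (convex_convexHull ℝ _)
  have hfin : (extremePoints ℝ (convexHull ℝ (A : Set E2))).Finite :=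
    A.finite_toSet.subset extremePoints_convexHull_subset
  rwa [(hfin.isClosed_convexHull (𝕜 := ℝ)).closure_eq] at h

lemma aux_frontier_nonempty (B : Finset E2) (hB : B.Nonempty) :
    (frontier (convexHull ℝ (B : Set E2))).Nonempty := by
  rw [nonempty_frontier_iff]
  exact ⟨(hB.to_set.mono (subset_convexHull ℝ _)),
    (B.finite_toSet.isCompact_convexHull (𝕜 := ℝ)).ne_univ⟩

lemma aux_subset (A B : Finset E2) (hB : B.Nonempty) {ε : ℝ} (hε : 0 ≤ ε)
    (h1 : ∀ a ∈ A, a ∉ convexHull ℝ ((A : Set E2) \ {a}) →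
      infDist a (frontier (convexHull ℝ (B : Set E2))) ≤ ε) :
    convexHull ℝ (A : Set E2) ⊆ cthickening ε (convexHull ℝ (B : Set E2)) := by
  set Q := convexHull ℝ (B : Set E2) with hQ
  have hQne : Q.Nonempty := hB.to_set.mono (subset_convexHull ℝ _)
  have hQclosed : IsClosed Q := B.finite_toSet.isClosed_convexHull (𝕜 := ℝ)
  have hfr := aux_frontier_nonempty B hB
  rw [← aux_hull_eq A]
  apply convexHull_min ?_ ((convex_convexHull ℝ _).cthickening ε)
  intro e he
  obtain ⟨heA, hee⟩ := aux_extreme A he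
  rw [aux_mem_cthickening_iff hQne hε]
  calc infDist e Q ≤ infDist e (frontier Q) :=
        infDist_le_infDist_of_subset hQclosed.frontier_subset hfr
    _ ≤ ε := h1 e heA hee

lemma aux_key (A B : Finset E2) (hA : A.Nonempty) (hB : B.Nonempty) {ε : ℝ} (hε : 0 ≤ ε)
    (hPQ : convexHull ℝ (A : Set E2) ⊆ cthickening ε (convexHull ℝ (B : Set E2)))
    (hQP : convexHull ℝ (B : Set E2) ⊆ cthickening ε (convexHull ℝ (A : Set E2))) :
    ∀ x ∈ frontier (convexHull ℝ (A : Set E2)),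
      infDist x (frontier (convexHull ℝ (B : Set E2))) ≤ ε := by
  set P := convexHull ℝ (A : Set E2) with hP
  set Q := convexHull ℝ (B : Set E2) with hQdef
  have hPne : P.Nonempty := hA.to_set.mono (subset_convexHull ℝ _)
  have hQne : Q.Nonempty := hB.to_set.mono (subset_convexHull ℝ _)
  have hPcomp : IsCompact P := A.finite_toSet.isCompact_convexHull (𝕜 := ℝ)
  have hQcomp : IsCompact Q := B.finite_toSet.isCompact_convexHull (𝕜 := ℝ)
  have hPclosed : IsClosed P := hPcomp.isClosed
  have hQclosed : IsClosed Q := hQcomp.isClosed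
  intro x hx
  have hxP : x ∈ P := hPclosed.frontier_subset hx
  by_cases hxQ : x ∈ Q
  · obtain ⟨y, hyf, hyd⟩ := hQcomp.exists_mem_frontier_infDist_compl_eq_dist hxQ
    refine le_trans (le_trans (infDist_le_dist_of_mem hyf) (le_of_eq hyd.symm)) ?_
    -- show infDist x Qᶜ ≤ ε
    by_contra hlt
    push_neg at hlt
    set d := infDist x Qᶜ with hd
    set ε' := (ε + d) / 2 with hε'
    have hε'1 : ε < ε' := by simp only [hε']; linarith
    have hε'2 : ε' < d := by simp only [hε']; linarith
    have hball : closedBall x ε' ⊆ Q := by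
      intro p hp
      by_contra hpQ
      have h2 : d ≤ dist x p := infDist_le_dist_of_mem hpQ
      rw [mem_closedBall, dist_comm] at hp
      linarith
    have hxcl : x ∈ closure Pᶜ := by
      rw [frontier_eq_closure_inter_closure] at hx; exact hx.2
    obtain ⟨w, hwP, hwd⟩ := Metric.mem_closure_iff.mp hxcl (ε' - ε) (by linarith)
    obtain ⟨v, hvP, hv⟩ := exists_norm_eq_iInf_of_complete_convex hPne
      hPclosed.isComplete (convex_convexHull ℝ _) w
    have hproj : ∀ y ∈ P, ⟪w - v, y - v⟫ ≤ 0 :=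
      (norm_eq_iInf_iff_real_inner_le_zero (convex_convexHull ℝ _) hvP).mp hv
    set u := w - v with hu_def
    have hu : u ≠ 0 := sub_ne_zero.2 (fun h => hwP (h ▸ hvP))
    have hun : (0:ℝ) < ‖u‖ := norm_pos_iff.2 hu
    set uh := ‖u‖⁻¹ • u with huh_def
    have huhn : ‖uh‖ = 1 := by
      rw [huh_def, norm_smul, Real.norm_eq_abs, abs_of_pos (by positivity)]
      field_simp
    set z := x + ε' • uh with hz_def
    have hzball : z ∈ closedBall x ε' := by
      rw [mem_closedBall, dist_eq_norm, hz_def, add_sub_cancel_left, norm_smul,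
        Real.norm_eq_abs, abs_of_nonneg (by linarith), huhn, mul_one]
    have hzP : infDist z P ≤ ε := (aux_mem_cthickening_iff hPne hε).mp (hQP (hball hzball))
    obtain ⟨y', hy'P, hy'd⟩ := hPcomp.exists_infDist_eq_dist hPne z
    have hinner_le : ⟪uh, z - y'⟫ ≤ dist z y' := by
      calc ⟪uh, z - y'⟫ ≤ ‖uh‖ * ‖z - y'‖ := real_inner_le_norm _ _
        _ = dist z y' := by rw [huhn, one_mul, dist_eq_norm]
    have hdecomp : z - y' = (x - w) + u + (v - y') + ε' • uh := by
      rw [hz_def, hu_def]; abel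
    have hsum : ⟪uh, z - y'⟫ = ⟪uh, x - w⟫ + ⟪uh, u⟫ + ⟪uh, v - y'⟫ + ε' * ⟪uh, uh⟫ := by
      rw [hdecomp, inner_add_right, inner_add_right, inner_add_right, real_inner_smul_right]
    have hself : ⟪uh, uh⟫ = 1 := by
      rw [real_inner_self_eq_norm_mul_norm, huhn, mul_one]
    have huu : ⟪uh, u⟫ = ‖u‖ := by
      rw [huh_def, real_inner_smul_left, real_inner_self_eq_norm_mul_norm]
      field_simp
    have hvy : 0 ≤ ⟪uh, v - y'⟫ := by
      have h3 := hproj y' hy'P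
      rw [huh_def, real_inner_smul_left, show v - y' = -(y' - v) by abel, inner_neg_right]
      have : (0:ℝ) ≤ ‖u‖⁻¹ := by positivity
      nlinarith
    have hxw : -(dist x w) ≤ ⟪uh, x - w⟫ := by
      have h4 : ⟪uh, w - x⟫ ≤ ‖uh‖ * ‖w - x‖ := real_inner_le_norm _ _
      rw [huhn, one_mul, ← dist_eq_norm, dist_comm] at h4
      rw [show x - w = -(w - x) by abel, inner_neg_right]
      linarith
    have hfinal : ε < dist z y' := by
      rw [hsum, hself, huu, mul_one] at hinner_le
      have : dist x w < ε' - ε := hwd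
      linarith
    rw [hy'd] at hzP
    linarith
  · have hxQd : infDist x Q ≤ ε := (aux_mem_cthickening_iff hQne hε).mp (hPQ hxP)
    obtain ⟨y, hyQ, hyd⟩ := hQcomp.exists_infDist_eq_dist hQne x
    have hyf : y ∈ frontier Q := aux_nearest_frontier hyQ hxQ hyd.symm
    calc infDist x (frontier Q) ≤ dist x y := infDist_le_dist_of_mem hyf
      _ = infDist x Q := hyd.symm
      _ ≤ ε := hxQd

/-- If every vertex of the convex polygon `∂(conv A)` is within distance `ε` of the
boundary of `conv B` and every vertex of `∂(conv B)` is within distance `ε` of the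
boundary of `conv A`, then the Hausdorff distance between the two boundaries is at
most `ε`.  (Vertices of the polygon are the extreme points of the hull.) -/
theorem stmt3 (A B : Finset (EuclideanSpace ℝ (Fin 2)))
    (hA : A.Nonempty) (hB : B.Nonempty) (ε : ℝ)
    (h1 : ∀ a ∈ A, a ∉ convexHull ℝ ((A : Set (EuclideanSpace ℝ (Fin 2))) \ {a}) →
      infDist a (frontier (convexHull ℝ (B : Set (EuclideanSpace ℝ (Fin 2))))) ≤ ε)
    (h2 : ∀ b ∈ B, b ∉ convexHull ℝ ((B : Set (EuclideanSpace ℝ (Fin 2))) \ {b}) →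
      infDist b (frontier (convexHull ℝ (A : Set (EuclideanSpace ℝ (Fin 2))))) ≤ ε) :
    hausdorffDist (frontier (convexHull ℝ (A : Set (EuclideanSpace ℝ (Fin 2)))))
      (frontier (convexHull ℝ (B : Set (EuclideanSpace ℝ (Fin 2))))) ≤ ε := by
  have hPne : (convexHull ℝ (A : Set E2)).Nonempty :=
    hA.to_set.mono (subset_convexHull ℝ _)
  have hε : 0 ≤ ε := by
    obtain ⟨e, he⟩ :=
      (A.finite_toSet.isCompact_convexHull (𝕜 := ℝ)).extremePoints_nonempty hPne
    obtain ⟨heA, hee⟩ := aux_extreme A he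
    exact le_trans (infDist_nonneg) (h1 e heA hee)
  have hPQ := aux_subset A B hB hε h1
  have hQP := aux_subset B A hA hε h2
  exact hausdorffDist_le_of_infDist hε (aux_key A B hA hB hε hPQ hQP)
    (aux_key B A hB hA hε hQP hPQ)
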